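/- Let p and Q be nonzero complex numbers. Then the quantum R matrix Ř⁴ is invertible and the Matveev Δ–∇ braid identity holds: (Ř⁴ ⊗ I₄)(I₄ ⊗ Ř⁴)^{−1}(Ř⁴ ⊗ I₄) = (I₄ ⊗ Ř⁴)(Ř⁴ ⊗ I₄)^{−1}(I₄ ⊗ Ř⁴), an identity of 64×64 complex matrices, so the braid-group representation generated by Ř⁴ cannot distinguish the braids σ₁σ₂^{−1}σ₁ and σ₂σ₁^{−1}σ₂. -/

import Mathlib

open Matrix

noncomputable section

/-- The elementary matrix `E(a,b;c,d)` on `ℂ⁴ ⊗ ℂ⁴`. -/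
def E (a b c d : Fin 4) : Matrix (Fin 4 × Fin 4) (Fin 4 × Fin 4) ℂ :=
  Matrix.single (a, b) (c, d) 1

/-- `M ⊗ I₄`, acting on the first two factors of `ℂ⁴ ⊗ ℂ⁴ ⊗ ℂ⁴`. -/
def op12 (M : Matrix (Fin 4 × Fin 4) (Fin 4 × Fin 4) ℂ) :
    Matrix (Fin 4 × Fin 4 × Fin 4) (Fin 4 × Fin 4 × Fin 4) ℂ :=
  Matrix.of fun x y => M (x.1, x.2.1) (y.1, y.2.1) * (if x.2.2 = y.2.2 then 1 else 0)

/-- `I₄ ⊗ M`, acting on the last two factors of `ℂ⁴ ⊗ ℂ⁴ ⊗ ℂ⁴`. -/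
def op23 (M : Matrix (Fin 4 × Fin 4) (Fin 4 × Fin 4) ℂ) :
    Matrix (Fin 4 × Fin 4 × Fin 4) (Fin 4 × Fin 4 × Fin 4) ℂ :=
  Matrix.of fun x y => (if x.1 = y.1 then 1 else 0) * M (x.2.1, x.2.2) (y.2.1, y.2.2)

/-- The left quantum partial trace `T(C, M)_{a,b} = Σ_{c,d} C_{d,c} M_{(c,a),(d,b)}`. -/
def ptrace (C : Matrix (Fin 4) (Fin 4) ℂ) (M : Matrix (Fin 4 × Fin 4) (Fin 4 × Fin 4) ℂ) :
    Matrix (Fin 4) (Fin 4) ℂ :=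
  Matrix.of fun a b => ∑ c : Fin 4, ∑ d : Fin 4, C d c * M (c, a) (d, b)

/-- The quantum R matrix `Ř⁴` (Case 4), with complex parameters `p, Q`
(indices shifted from 1–4 to 0–3). -/
def R4 (p Q : ℂ) : Matrix (Fin 4 × Fin 4) (Fin 4 × Fin 4) ℂ :=
  E 0 0 0 0
  - (p ^ 2 * Q⁻¹ ^ 2) • (E 1 1 1 1 + E 2 2 2 2)
  + (p ^ 4) • E 3 3 3 3
  + (p * Q⁻¹) • (E 0 1 1 0 + E 0 2 2 0 + E 1 0 0 1 + E 2 0 0 2)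
  + (p ^ 3 * Q⁻¹) • (E 1 3 3 1 + E 2 3 3 2 + E 3 1 1 3 + E 3 2 2 3)
  + (p ^ 2 * Q⁻¹ ^ 2) • (E 0 3 3 0 + E 3 0 0 3)
  - (p ^ 2) • (E 1 2 2 1 + E 2 1 1 2)

/-! ### Auxiliary machinery: monomial matrices -/

/-- A monomial matrix: row `x` has its only (possibly) nonzero entry at column `σ x`,
with value `w x`. -/
def Mono {n : Type*} [DecidableEq n] (σ : n → n) (w : n → ℂ) : Matrix n n ℂ :=
  Matrix.of fun x y => if y = σ x then w x else 0

lemma Mono_mul {n : Type*} [DecidableEq n] [Fintype n] (σ τ : n → n) (w v : n → ℂ) :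
    Mono σ w * Mono τ v = Mono (fun x => τ (σ x)) (fun x => w x * v (σ x)) := by
  ext x y
  rw [Matrix.mul_apply]
  simp only [Mono, Matrix.of_apply]
  rw [Finset.sum_eq_single (σ x)]
  · by_cases h : y = τ (σ x) <;> simp [h]
  · intro b _ hb; simp [hb]
  · simp

lemma Mono_eq_one {n : Type*} [DecidableEq n] [Fintype n] (σ : n → n) (w : n → ℂ)
    (hσ : ∀ x, σ x = x) (hw : ∀ x, w x = 1) : Mono σ w = 1 := by
  ext x y
  simp [Mono, Matrix.one_apply, hσ, hw, eq_comm]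

/-- The coefficient function of `R4`: `R4 (a,b) (c,d) = if (c,d)=(b,a) then cf a b else 0`. -/
def cf (p Q : ℂ) : Fin 4 → Fin 4 → ℂ := fun a b =>
  ![![1, p * Q⁻¹, p * Q⁻¹, p ^ 2 * Q⁻¹ ^ 2],
    ![p * Q⁻¹, -(p ^ 2 * Q⁻¹ ^ 2), -(p ^ 2), p ^ 3 * Q⁻¹],
    ![p * Q⁻¹, -(p ^ 2), -(p ^ 2 * Q⁻¹ ^ 2), p ^ 3 * Q⁻¹],
    ![p ^ 2 * Q⁻¹ ^ 2, p ^ 3 * Q⁻¹, p ^ 3 * Q⁻¹, p ^ 4]] a b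

lemma cf_ne (p Q : ℂ) (hp : p ≠ 0) (hQ : Q ≠ 0) (a b : Fin 4) : cf p Q a b ≠ 0 := by
  have h1 : Q⁻¹ ≠ 0 := inv_ne_zero hQ
  fin_cases a <;> fin_cases b <;>
    simp [cf, hp, hQ, h1, pow_ne_zero, mul_ne_zero, neg_ne_zero]

set_option maxHeartbeats 4000000 in
lemma R4_eq (p Q : ℂ) :
    R4 p Q = Mono (fun x : Fin 4 × Fin 4 => (x.2, x.1)) (fun x => cf p Q x.1 x.2) := by
  ext ⟨a, b⟩ ⟨x, y⟩
  fin_cases a <;> fin_cases b <;> fin_cases x <;> fin_cases y <;>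
  · simp only [R4, E, Mono, cf, Matrix.single, Matrix.add_apply, Matrix.sub_apply,
      Matrix.smul_apply, Matrix.of_apply, Prod.mk.injEq, smul_eq_mul]
    simp

lemma op12_mono (f : Fin 4 → Fin 4 → ℂ) :
    op12 (Mono (fun x : Fin 4 × Fin 4 => (x.2, x.1)) (fun x => f x.1 x.2)) =
    Mono (fun x : Fin 4 × Fin 4 × Fin 4 => (x.2.1, x.1, x.2.2)) (fun x => f x.1 x.2.1) := by
  ext ⟨a, b, c⟩ ⟨x, y, z⟩
  simp only [op12, Mono, Matrix.of_apply, Prod.mk.injEq]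
  split_ifs <;> simp_all

lemma op23_mono (f : Fin 4 → Fin 4 → ℂ) :
    op23 (Mono (fun x : Fin 4 × Fin 4 => (x.2, x.1)) (fun x => f x.1 x.2)) =
    Mono (fun x : Fin 4 × Fin 4 × Fin 4 => (x.1, x.2.2, x.2.1)) (fun x => f x.2.1 x.2.2) := by
  ext ⟨a, b, c⟩ ⟨x, y, z⟩
  simp only [op23, Mono, Matrix.of_apply, Prod.mk.injEq]
  split_ifs <;> simp_all

/-- `Ř⁴` is invertible and satisfies the Matveev Δ–∇ braid identity
`(Ř⁴ ⊗ I)(I ⊗ Ř⁴)⁻¹(Ř⁴ ⊗ I) = (I ⊗ Ř⁴)(Ř⁴ ⊗ I)⁻¹(I ⊗ Ř⁴)`. -/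
theorem R4_Matveev (p Q : ℂ) (hp : p ≠ 0) (hQ : Q ≠ 0) :
    IsUnit (R4 p Q) ∧
    op12 (R4 p Q) * (op23 (R4 p Q))⁻¹ * op12 (R4 p Q) =
      op23 (R4 p Q) * (op12 (R4 p Q))⁻¹ * op23 (R4 p Q) := by
  -- the inverse coefficient function
  set f : Fin 4 → Fin 4 → ℂ := cf p Q with hf
  set g : Fin 4 → Fin 4 → ℂ := fun a b => (cf p Q b a)⁻¹ with hg
  have hfg : ∀ a b, f a b * g b a = 1 := fun a b =>
    mul_inv_cancel₀ (cf_ne p Q hp hQ a b)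
  -- R4 and its two-sided inverse as monomial matrices
  have hR : R4 p Q = Mono (fun x : Fin 4 × Fin 4 => (x.2, x.1)) (fun x => f x.1 x.2) :=
    R4_eq p Q
  have hRS : R4 p Q * Mono (fun x : Fin 4 × Fin 4 => (x.2, x.1)) (fun x => g x.1 x.2) = 1 := by
    rw [hR, Mono_mul]
    exact Mono_eq_one _ _ (fun x => rfl) (fun x => hfg x.1 x.2)
  have hUnit : IsUnit (R4 p Q) :=
    (Matrix.isUnit_iff_isUnit_det _).mpr (Matrix.isUnit_det_of_right_inverse hRS)
  refine ⟨hUnit, ?_⟩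
  -- inverses of op12/op23
  have h12inv : (op12 (R4 p Q))⁻¹ =
      op12 (Mono (fun x : Fin 4 × Fin 4 => (x.2, x.1)) (fun x => g x.1 x.2)) := by
    apply Matrix.inv_eq_right_inv
    rw [hR, op12_mono, op12_mono, Mono_mul]
    exact Mono_eq_one _ _ (fun x => rfl) (fun x => hfg x.1 x.2.1)
  have h23inv : (op23 (R4 p Q))⁻¹ =
      op23 (Mono (fun x : Fin 4 × Fin 4 => (x.2, x.1)) (fun x => g x.1 x.2)) := by
    apply Matrix.inv_eq_right_inv
    rw [hR, op23_mono, op23_mono, Mono_mul]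
    exact Mono_eq_one _ _ (fun x => rfl) (fun x => hfg x.2.1 x.2.2)
  rw [h12inv, h23inv, hR, op12_mono, op23_mono, op12_mono, op23_mono,
    Mono_mul, Mono_mul, Mono_mul, Mono_mul]
  ext x y
  simp only [Mono, Matrix.of_apply]
  split_ifs with h
  · ring
  · rfl
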